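/- Let E be a strongly archimedean convex SEA (with its canonical compression base) and let a,b∈E be such that the projection cover a° exists and b is the norm limit of a sequence (b_n) with b_n≤b for each n and b_n=⊕_i λ_{n,i} p_{n,i} for some λ_{n,i}∈[0,1] and sharp elements p_{n,i}. Then a∘b=0 if and only if a°∘b=0. -/

import Mathlib

universe u

/-- An effect algebra: the partially defined sum `⊕` is encoded via `Option`. -/
class EffectAlgebra (E : Type u) where
  oplus : E → E → Option E
  zero : E
  one : E
  oplus_comm : ∀ a b : E, oplus a b = oplus b a
  oplus_assoc : ∀ {a b c ab abc : E}, oplus a b = some ab → oplus ab c = some abc →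
    ∃ bc : E, oplus b c = some bc ∧ oplus a bc = some abc
  exists_perp : ∀ a : E, ∃ b : E, oplus a b = some one
  perp_unique : ∀ {a b c : E}, oplus a b = some one → oplus a c = some one → b = c
  oplus_one : ∀ {a b : E}, oplus a one = some b → a = zero

namespace EffectAlgebra

variable {E : Type u} [EffectAlgebra E]

/-- The orthosupplement `a^⊥`. -/
noncomputable def perp (a : E) : E := Classical.choose (exists_perp a)

/-- The partial order: `a ≤ b` iff `a ⊕ c = b` for some `c`. -/
def le (a b : E) : Prop := ∃ c : E, oplus a c = some b

/-- Sharp elements. -/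
def Sharp (a : E) : Prop := ∀ x : E, le x a → le x (perp a) → x = zero

/-- Finite orthosums of lists of elements. -/
def osum : List E → Option E
  | [] => some zero
  | a :: l => (osum l).bind fun s => oplus a s

/-- Mackey compatibility `a ↔ b`. -/
def MCompat (a b : E) : Prop :=
  ∃ a₁ b₁ c s t : E, oplus a₁ b₁ = some s ∧ oplus s c = some t ∧
    oplus a₁ c = some a ∧ oplus b₁ c = some b

/-- `a` is the supremum of the sequence `f`. -/
def IsSupSeq (f : ℕ → E) (a : E) : Prop :=
  (∀ n, le (f n) a) ∧ ∀ b : E, (∀ n, le (f n) b) → le a b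

/-- `a` is the infimum of the sequence `f`. -/
def IsInfSeq (f : ℕ → E) (a : E) : Prop :=
  (∀ n, le a (f n)) ∧ ∀ b : E, (∀ n, le b (f n)) → le b a

/-- `a` is the infimum of the set `S`. -/
def IsInfSet (S : Set E) (a : E) : Prop :=
  (∀ x ∈ S, le a x) ∧ ∀ b : E, (∀ x ∈ S, le b x) → le b a

/-- `a` is the supremum of `f` computed inside the subset `S`. -/
def IsSupSeqIn (S : Set E) (f : ℕ → E) (a : E) : Prop :=
  a ∈ S ∧ (∀ n, le (f n) a) ∧ ∀ b ∈ S, (∀ n, le (f n) b) → le a b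

variable (E) in
/-- Monotone σ-completeness: every ascending sequence has a supremum. -/
def MonotoneSigmaComplete : Prop :=
  ∀ f : ℕ → E, (∀ n, le (f n) (f (n + 1))) → ∃ a : E, IsSupSeq f a

end EffectAlgebra

open EffectAlgebra in
/-- A compression base `(J_p)_{p ∈ P}` on an effect algebra. -/
structure CompressionBase (E : Type u) [EffectAlgebra E] where
  P : Set E
  J : E → E → E
  zero_mem : zero ∈ P
  one_mem : one ∈ P
  perp_mem : ∀ p ∈ P, perp p ∈ P
  oplus_mem : ∀ p ∈ P, ∀ q ∈ P, ∀ r : E, oplus p q = some r → r ∈ P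
  normal : ∀ e f d s t x y : E, oplus e f = some s → oplus s d = some t →
    oplus e d = some x → x ∈ P → oplus f d = some y → y ∈ P → d ∈ P
  additive : ∀ p ∈ P, ∀ a b c : E, oplus a b = some c →
    oplus (J p a) (J p b) = some (J p c)
  retraction : ∀ p ∈ P, ∀ a : E, le a p → J p a = a
  focus : ∀ p ∈ P, J p one = p
  compression : ∀ p ∈ P, ∀ a : E, (J p a = zero ↔ le a (perp p))
  compose : ∀ p ∈ P, ∀ q ∈ P, ∀ r ∈ P, ∀ s t qr : E,
    oplus p q = some s → oplus s r = some t → oplus q r = some qr →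
    ∀ a : E, J s (J qr a) = J q a

namespace CompressionBase

open EffectAlgebra

variable {E : Type u} [EffectAlgebra E] (cb : CompressionBase E)

/-- The commutant `C(p)` of a projection `p`. -/
noncomputable def Cset (p : E) : Set E :=
  {a : E | oplus (cb.J p a) (cb.J (perp p) a) = some a}

/-- `PC(a)`: projections compatible with `a`. -/
noncomputable def PC (a : E) : Set E := {p : E | p ∈ cb.P ∧ a ∈ cb.Cset p}

/-- The P-bicommutant `P(a) = PC(PC(a) ∪ {a})`. -/
noncomputable def Pbicomm (a : E) : Set E :=
  {p : E | p ∈ cb.P ∧ a ∈ cb.Cset p ∧ ∀ q ∈ cb.PC a, q ∈ cb.Cset p}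

/-- `p` is the projection cover of `a`. -/
def IsProjCover (a p : E) : Prop :=
  p ∈ cb.P ∧ ∀ q ∈ cb.P, (le a q ↔ le p q)

/-- The projection cover property. -/
def ProjCoverProp : Prop := ∀ a : E, ∃ p : E, cb.IsProjCover a p

/-- `B` is a Boolean subalgebra of the set of projections. -/
noncomputable def BooleanSub (B : Set E) : Prop :=
  B ⊆ cb.P ∧ zero ∈ B ∧ one ∈ B ∧ (∀ p ∈ B, perp p ∈ B) ∧
  (∀ p ∈ B, ∀ q ∈ B, MCompat p q) ∧
  (∀ p ∈ B, ∀ q ∈ B, ∀ r : E, oplus p q = some r → r ∈ B)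

/-- The b-property. -/
noncomputable def BProperty : Prop :=
  ∀ a : E, ∃ B : Set E, cb.BooleanSub B ∧
    ∀ p ∈ cb.P, (a ∈ cb.Cset p ↔ ∀ b ∈ B, b ∈ cb.Cset p)

/-- Commutativity `aCb` of b-elements. -/
noncomputable def CommuteC (a b : E) : Prop :=
  ∀ p ∈ cb.Pbicomm a, ∀ q ∈ cb.Pbicomm b, MCompat p q

/-- The b-comparability property. -/
noncomputable def BComparability : Prop :=
  cb.BProperty ∧
  ∀ e f : E, cb.CommuteC e f → ∃ p : E, p ∈ cb.Pbicomm e ∧ p ∈ cb.Pbicomm f ∧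
    le (cb.J p e) (cb.J p f) ∧ le (cb.J (perp p) f) (cb.J (perp p) e)

/-- Spectrality: projection cover property plus b-comparability. -/
noncomputable def Spectral : Prop := cb.ProjCoverProp ∧ cb.BComparability

/-- `p` is the floor of `a` (the largest projection below `a`). -/
def IsFloor (a p : E) : Prop :=
  p ∈ cb.P ∧ le p a ∧ ∀ q ∈ cb.P, le q a → le q p

end CompressionBase

open EffectAlgebra in
/-- A sequential effect algebra (SEA). -/
class SEA (E : Type u) [EffectAlgebra E] where
  seq : E → E → E
  seq_oplus : ∀ a b c d : E, oplus b c = some d →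
    oplus (seq a b) (seq a c) = some (seq a d)
  one_seq : ∀ a : E, seq one a = a
  seq_zero_symm : ∀ a b : E, seq a b = zero → seq b a = zero
  comm_perp : ∀ a b : E, seq a b = seq b a → seq a (perp b) = seq (perp b) a
  comm_assoc : ∀ a b c : E, seq a b = seq b a → seq a (seq b c) = seq (seq a b) c
  comm_seq : ∀ a b c : E, seq c a = seq a c → seq c b = seq b c →
    seq c (seq a b) = seq (seq a b) c
  comm_oplus : ∀ a b c d : E, seq c a = seq a c → seq c b = seq b c →
    oplus a b = some d → seq c d = seq d c

namespace EffectAlgebra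

variable {E : Type u} [EffectAlgebra E]

section SEAdefs

variable [SEA E]

/-- `a | b` : the sequential product commutes. -/
def Commutes (a b : E) : Prop := SEA.seq a b = SEA.seq b a

/-- The commutant `S'` of a subset. -/
def commutant (S : Set E) : Set E := {a : E | ∀ s ∈ S, Commutes a s}

/-- The bicommutant `S''`. -/
def bicommutant (S : Set E) : Set E := commutant (commutant S)

/-- A sub-SEA: a sub-effect algebra closed under the sequential product. -/
noncomputable def SubSEA (S : Set E) : Prop :=
  zero ∈ S ∧ one ∈ S ∧ (∀ a ∈ S, perp a ∈ S) ∧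
  (∀ a ∈ S, ∀ b ∈ S, ∀ c : E, oplus a b = some c → c ∈ S) ∧
  (∀ a ∈ S, ∀ b ∈ S, SEA.seq a b ∈ S)

/-- A commutative sub-SEA. -/
noncomputable def CommSubSEA (S : Set E) : Prop :=
  SubSEA S ∧ ∀ a ∈ S, ∀ b ∈ S, Commutes a b

/-- A maximal commutative sub-SEA. -/
noncomputable def MaxCommSubSEA (S : Set E) : Prop :=
  CommSubSEA S ∧ ∀ T : Set E, CommSubSEA T → S ⊆ T → T = S

/-- `C(p)` for the canonical compression base `J_p = p ∘ ·` of a SEA. -/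
noncomputable def sC (p : E) : Set E :=
  {a : E | oplus (SEA.seq p a) (SEA.seq (perp p) a) = some a}

/-- `PC(a)` for the canonical compression base. -/
noncomputable def sPC (a : E) : Set E := {p : E | Sharp p ∧ a ∈ sC p}

/-- The P-bicommutant `P(a)` for the canonical compression base. -/
noncomputable def sPbicomm (a : E) : Set E :=
  {p : E | Sharp p ∧ a ∈ sC p ∧ ∀ q ∈ sPC a, q ∈ sC p}

/-- `p` is the projection cover of `a` (canonical compression base). -/
noncomputable def sIsProjCover (a p : E) : Prop :=
  Sharp p ∧ ∀ q : E, Sharp q → (le a q ↔ le p q)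

variable (E) in
/-- The projection cover property (canonical compression base). -/
noncomputable def sProjCoverProp : Prop := ∀ a : E, ∃ p : E, sIsProjCover a p

/-- `B` is a Boolean subalgebra of the sharp elements. -/
noncomputable def sBooleanSub (B : Set E) : Prop :=
  (∀ p ∈ B, Sharp p) ∧ zero ∈ B ∧ one ∈ B ∧ (∀ p ∈ B, perp p ∈ B) ∧
  (∀ p ∈ B, ∀ q ∈ B, MCompat p q) ∧
  (∀ p ∈ B, ∀ q ∈ B, ∀ r : E, oplus p q = some r → r ∈ B)

variable (E) in
/-- The b-property (canonical compression base). -/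
noncomputable def sBProperty : Prop :=
  ∀ a : E, ∃ B : Set E, sBooleanSub B ∧
    ∀ p : E, Sharp p → (a ∈ sC p ↔ ∀ b ∈ B, b ∈ sC p)

/-- `aCb` (canonical compression base). -/
noncomputable def sCommuteC (a b : E) : Prop :=
  ∀ p ∈ sPbicomm a, ∀ q ∈ sPbicomm b, MCompat p q

variable (E) in
/-- The b-comparability property (canonical compression base). -/
noncomputable def sBComparability : Prop :=
  sBProperty E ∧
  ∀ e f : E, sCommuteC e f → ∃ p : E, p ∈ sPbicomm e ∧ p ∈ sPbicomm f ∧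
    le (SEA.seq p e) (SEA.seq p f) ∧
    le (SEA.seq (perp p) f) (SEA.seq (perp p) e)

variable (E) in
/-- Spectrality of a SEA with respect to its canonical compression base. -/
noncomputable def sSpectral : Prop := sProjCoverProp E ∧ sBComparability E

/-- `p` is the floor of `a` (canonical compression base). -/
noncomputable def sIsFloor (a p : E) : Prop :=
  Sharp p ∧ le p a ∧ ∀ q : E, Sharp q → le q a → le q p

variable (E) in
/-- Property A. -/
def PropertyA : Prop :=
  ∀ (f : ℕ → E) (a b : E), (∀ n, le (f n) (f (n + 1))) →
    (∀ m n, Commutes (f m) (f n)) → IsSupSeq f a →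
    (∀ n, Commutes (f n) b) → Commutes a b

variable (E) in
/-- A σ-SEA. -/
def SigmaSEA : Prop :=
  MonotoneSigmaComplete E ∧
  ∀ (f : ℕ → E) (m : E), (∀ n, le (f (n + 1)) (f n)) → IsInfSeq f m →
    ∀ b : E, IsInfSeq (fun n => SEA.seq b (f n)) (SEA.seq b m) ∧
      ((∀ n, Commutes b (f n)) → Commutes b m)

/-- Iterated sequential powers: `seqPow a n = a^(n+1)`. -/
def seqPow (a : E) : ℕ → E
  | 0 => a
  | n + 1 => SEA.seq a (seqPow a n)

end SEAdefs

end EffectAlgebra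

open EffectAlgebra in
/-- A convex effect algebra: scalar multiplication by reals in `[0,1]`. -/
class ConvexEA (E : Type u) [EffectAlgebra E] where
  smul : ℝ → E → E
  smul_smul : ∀ (l m : ℝ) (a : E), 0 ≤ l → l ≤ 1 → 0 ≤ m → m ≤ 1 →
    smul m (smul l a) = smul (l * m) a
  smul_add_coeff : ∀ (l m : ℝ) (a : E), 0 ≤ l → 0 ≤ m → l + m ≤ 1 →
    oplus (smul l a) (smul m a) = some (smul (l + m) a)
  smul_oplus : ∀ (l : ℝ) (a b c : E), 0 ≤ l → l ≤ 1 → oplus a b = some c →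
    oplus (smul l a) (smul l b) = some (smul l c)
  one_smul : ∀ a : E, smul 1 a = a

namespace EffectAlgebra

variable {E : Type u} [EffectAlgebra E]

section Convexdefs

variable [ConvexEA E]

variable (E) in
/-- Strong archimedeanity. -/
def StronglyArchimedean : Prop :=
  ∀ a b c : E,
    (∀ n : ℕ, ∃ d : E, oplus b (ConvexEA.smul (1 / (n + 1) : ℝ) c) = some d ∧ le a d) →
    le a b

/-- `DistLE a b ε` encodes `‖a - b‖ ≤ ε` in the order unit norm:
`(1/2)a ≤ (1/2)b ⊕ (ε/2)1` and symmetrically (with `ε` clamped to `[0,1]`). -/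
def DistLE (a b : E) (ε : ℝ) : Prop :=
  (∃ d : E, oplus (ConvexEA.smul (2⁻¹ : ℝ) b) (ConvexEA.smul (min ε 1 / 2) one) = some d ∧
    le (ConvexEA.smul (2⁻¹ : ℝ) a) d) ∧
  (∃ d : E, oplus (ConvexEA.smul (2⁻¹ : ℝ) a) (ConvexEA.smul (min ε 1 / 2) one) = some d ∧
    le (ConvexEA.smul (2⁻¹ : ℝ) b) d)

/-- Norm convergence of a sequence. -/
def NormLimit (f : ℕ → E) (a : E) : Prop :=
  ∀ ε : ℝ, 0 < ε → ∃ N : ℕ, ∀ n ≥ N, DistLE (f n) a ε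

/-- Cauchy sequences with respect to the order unit norm. -/
def CauchySeqE (f : ℕ → E) : Prop :=
  ∀ ε : ℝ, 0 < ε → ∃ N : ℕ, ∀ m ≥ N, ∀ n ≥ N, DistLE (f m) (f n) ε

variable (E) in
/-- Norm completeness. -/
def NormComplete : Prop := ∀ f : ℕ → E, CauchySeqE f → ∃ a : E, NormLimit f a

/-- A norm-closed subset. -/
def NormClosedSet (S : Set E) : Prop :=
  ∀ (f : ℕ → E) (a : E), (∀ n, f n ∈ S) → NormLimit f a → a ∈ S

/-- A norm-complete subset. -/
def NormCompleteSet (S : Set E) : Prop :=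
  ∀ f : ℕ → E, (∀ n, f n ∈ S) → CauchySeqE f → ∃ a ∈ S, NormLimit f a

/-- One-dimensional elements. -/
def OneDim (a : E) : Prop :=
  ∀ b : E, le b a → ∃ t : ℝ, 0 ≤ t ∧ t ≤ 1 ∧ b = ConvexEA.smul t a

/-- `l` is a representation of `a` as a simple element:
`a = ⊕ μ_i p_i` with `μ_i ∈ [0,1]`, `p_i` sharp and `⊕ p_i = 1`. -/
noncomputable def SimpleRep (a : E) (l : List (ℝ × E)) : Prop :=
  (∀ x ∈ l, x.1 ∈ Set.Icc (0 : ℝ) 1 ∧ Sharp x.2) ∧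
  osum (l.map Prod.snd) = some one ∧
  osum (l.map fun x => ConvexEA.smul x.1 x.2) = some a

/-- Simple elements. -/
noncomputable def SimpleElem (a : E) : Prop := ∃ l : List (ℝ × E), SimpleRep a l

/-- A reduced representation: strictly increasing coefficients, nonzero sharp elements. -/
noncomputable def ReducedRep (a : E) (l : List (ℝ × E)) : Prop :=
  SimpleRep a l ∧ (l.map Prod.fst).Chain' (· < ·) ∧ ∀ x ∈ l, x.2 ≠ zero

end Convexdefs

section SpecRes

variable [SEA E] [ConvexEA E]

/-- `p` is the spectral resolution of `a` (canonical compression base): a family of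
projections in the bicommutant of `a`, nondecreasing and right continuous on `[0,1]`,
with `J_{p_λ}(a) ≤ λ p_λ` and `λ p_λ^⊥ ≤ J_{p_λ^⊥}(a)`. -/
noncomputable def sIsSpecRes (a : E) (p : ℝ → E) : Prop :=
  (∀ l : ℝ, 0 ≤ l → l ≤ 1 → p l ∈ sPbicomm a) ∧
  (∀ l m : ℝ, 0 ≤ l → l ≤ m → m ≤ 1 → le (p l) (p m)) ∧
  (∀ l : ℝ, 0 ≤ l → l < 1 →
    IsInfSet {x : E | ∃ m : ℝ, l < m ∧ m ≤ 1 ∧ x = p m} (p l)) ∧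
  (∀ l : ℝ, 0 ≤ l → l ≤ 1 →
    le (SEA.seq (p l) a) (ConvexEA.smul l (p l)) ∧
    le (ConvexEA.smul l (perp (p l))) (SEA.seq (perp (p l)) a))

end SpecRes

end EffectAlgebra

namespace CompressionBase

open EffectAlgebra

variable {E : Type u} [EffectAlgebra E] [ConvexEA E] (cb : CompressionBase E)

/-- `p` is the spectral resolution of `a` with respect to the compression base `cb`. -/
noncomputable def IsSpecRes (a : E) (p : ℝ → E) : Prop :=
  (∀ l : ℝ, 0 ≤ l → l ≤ 1 → p l ∈ cb.Pbicomm a) ∧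
  (∀ l m : ℝ, 0 ≤ l → l ≤ m → m ≤ 1 → le (p l) (p m)) ∧
  (∀ l : ℝ, 0 ≤ l → l < 1 →
    IsInfSet {x : E | ∃ m : ℝ, l < m ∧ m ≤ 1 ∧ x = p m} (p l)) ∧
  (∀ l : ℝ, 0 ≤ l → l ≤ 1 →
    le (cb.J (p l) a) (ConvexEA.smul l (p l)) ∧
    le (ConvexEA.smul l (perp (p l))) (cb.J (perp (p l)) a))

end CompressionBase


section Stmt6Aux

open EffectAlgebra

variable {E : Type u} [EffectAlgebra E]

theorem ea_perp_spec (a : E) : oplus a (perp a) = some one :=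
  Classical.choose_spec (exists_perp a)

theorem ea_one_zero : oplus (one : E) zero = some one := by
  obtain ⟨z, hz⟩ := exists_perp (one : E)
  have hz0 : z = zero := oplus_one (by rw [oplus_comm]; exact hz)
  rw [← hz0]; exact hz

theorem ea_oplus_zero (a : E) : oplus a zero = some a := by
  have h1 : oplus (perp a) a = some one := by rw [oplus_comm]; exact ea_perp_spec a
  obtain ⟨bc, hbc, h2⟩ := oplus_assoc h1 ea_one_zero
  rwa [perp_unique h2 h1] at hbc

theorem ea_zero_oplus (a : E) : oplus zero a = some a := by
  rw [oplus_comm]; exact ea_oplus_zero a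

theorem ea_le_refl (a : E) : le a a := ⟨zero, ea_oplus_zero a⟩

theorem ea_le_one (a : E) : le a one := ⟨perp a, ea_perp_spec a⟩

theorem ea_rot {a b c u t : E} (h1 : oplus b c = some u) (h2 : oplus a u = some t) :
    ∃ s, oplus c a = some s ∧ oplus b s = some t := by
  rw [oplus_comm] at h2
  exact oplus_assoc h1 h2

theorem ea_cancel {a b c d : E} (h1 : oplus a b = some d) (h2 : oplus a c = some d) :
    b = c := by
  have hd := ea_perp_spec d
  rw [oplus_comm] at h1 h2
  obtain ⟨u, hu, hbu⟩ := oplus_assoc h1 hd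
  obtain ⟨u', hu', hcu⟩ := oplus_assoc h2 hd
  have huu : u = u' := by rw [hu] at hu'; exact Option.some.inj hu'
  rw [← huu] at hcu
  rw [oplus_comm] at hbu hcu
  exact perp_unique hbu hcu

theorem ea_le_trans {a b c : E} (h1 : le a b) (h2 : le b c) : le a c := by
  obtain ⟨x, hx⟩ := h1; obtain ⟨y, hy⟩ := h2
  obtain ⟨u, _, h⟩ := oplus_assoc hx hy
  exact ⟨u, h⟩

theorem ea_eq_zero_left {x y : E} (h : oplus x y = some zero) : x = zero := by
  have h2 : oplus (zero : E) one = some one := by rw [oplus_comm]; exact ea_one_zero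
  obtain ⟨u, hu, _⟩ := oplus_assoc h h2
  have hy : y = zero := oplus_one hu
  subst hy
  rw [ea_oplus_zero x] at h
  exact Option.some.inj h

theorem ea_le_zero {x : E} (h : le x zero) : x = zero := by
  obtain ⟨c, hc⟩ := h; exact ea_eq_zero_left hc

theorem ea_perp_perp (a : E) : perp (perp a) = a :=
  perp_unique (ea_perp_spec (perp a)) (by rw [oplus_comm]; exact ea_perp_spec a)

theorem ea_perp_le_perp {x y : E} (h : le x y) : le (perp y) (perp x) := by
  obtain ⟨c, hc⟩ := h
  obtain ⟨u, hu, hxu⟩ := oplus_assoc hc (ea_perp_spec y)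
  have hux : u = perp x := perp_unique hxu (ea_perp_spec x)
  exact ⟨c, by rw [oplus_comm, hux] at hu; exact hu⟩

theorem ea_sharp_perp {q : E} (h : Sharp q) : Sharp (perp q) := by
  intro x h1 h2
  rw [ea_perp_perp] at h2
  exact h x h2 h1

theorem ea_oplus_le_left {x x' y s t : E} (h : le x x') (hs : oplus x y = some s)
    (ht : oplus x' y = some t) : le s t := by
  obtain ⟨c, hc⟩ := h
  have ht' : oplus y x' = some t := by rw [oplus_comm]; exact ht
  obtain ⟨s1, hs1, hxs1⟩ := ea_rot hc ht'
  obtain ⟨s2, hs2, hcs2⟩ := ea_rot hs1 hxs1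
  have : s2 = s := by
    rw [oplus_comm] at hs2; rw [hs2] at hs; exact Option.some.inj hs
  rw [this] at hcs2
  exact ⟨c, by rw [oplus_comm]; exact hcs2⟩

theorem ea_oplus_le_right {x y z t : E} (h : le z y) (ht : oplus x y = some t) :
    ∃ s, oplus x z = some s ∧ le s t := by
  obtain ⟨c, hc⟩ := h
  obtain ⟨s1, hs1, hz1⟩ := ea_rot hc ht
  obtain ⟨s2, hs2, hcs2⟩ := ea_rot hs1 hz1
  exact ⟨s2, hs2, ⟨c, by rw [oplus_comm]; exact hcs2⟩⟩

theorem ea_oplus_le_left' {x y z t : E} (h : le z x) (ht : oplus x y = some t) :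
    ∃ s, oplus z y = some s ∧ le s t := by
  rw [oplus_comm] at ht
  obtain ⟨s, hs, hst⟩ := ea_oplus_le_right h ht
  exact ⟨s, by rw [oplus_comm]; exact hs, hst⟩

theorem ea_osum_cons {a : E} {t : List E} {s : E} (h : osum (a :: t) = some s) :
    ∃ s', osum t = some s' ∧ oplus a s' = some s := by
  rw [osum] at h
  exact Option.bind_eq_some_iff.mp h

theorem ea_osum_le {l : List E} {s : E} (h : osum l = some s) : ∀ x ∈ l, le x s := by
  induction l generalizing s with
  | nil => simp
  | cons a t ih =>
    intro x hx
    obtain ⟨s', ht, ha⟩ := ea_osum_cons h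
    rcases List.mem_cons.mp hx with rfl | hx
    · exact ⟨s', ha⟩
    · exact ea_le_trans (ih ht x hx) ⟨a, by rw [oplus_comm]; exact ha⟩

theorem ea_osum_all_zero {l : List E} (h : ∀ x ∈ l, x = zero) : osum l = some zero := by
  induction l with
  | nil => rfl
  | cons a t ih =>
    have ht := ih (fun x hx => h x (List.mem_cons_of_mem a hx))
    have ha : a = zero := h a List.mem_cons_self
    rw [osum, ht]
    show oplus a zero = some zero
    rw [ha]; exact ea_oplus_zero zero

section SeqAux

variable [SEA E]

theorem ea_seq_mono (a : E) {x y : E} (h : le x y) :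
    le (SEA.seq a x) (SEA.seq a y) := by
  obtain ⟨c, hc⟩ := h
  exact ⟨SEA.seq a c, SEA.seq_oplus a x c y hc⟩

theorem ea_seq_zero (a : E) : SEA.seq a zero = zero := by
  have h := SEA.seq_oplus a zero zero zero (ea_oplus_zero zero)
  exact ea_cancel h (ea_oplus_zero (SEA.seq a zero))

theorem ea_seq_one (a : E) : SEA.seq a one = a := by
  have hcomm : SEA.seq a one = SEA.seq one a :=
    SEA.comm_oplus a (perp a) a one rfl (SEA.comm_perp a a rfl) (ea_perp_spec a)
  rw [hcomm, SEA.one_seq]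

theorem ea_seq_le_left (a b : E) : le (SEA.seq a b) a := by
  have h := SEA.seq_oplus a b (perp b) one (ea_perp_spec b)
  rw [ea_seq_one] at h
  exact ⟨SEA.seq a (perp b), h⟩

theorem ea_le_perp_of_seq_zero {p x : E} (h : SEA.seq p x = zero) : le x (perp p) := by
  have hxp : SEA.seq x p = zero := SEA.seq_zero_symm p x h
  have hc : SEA.seq x p = SEA.seq p x := by rw [h, hxp]
  have hcp : SEA.seq x (perp p) = SEA.seq (perp p) x := SEA.comm_perp x p hc
  have hsum := SEA.seq_oplus x p (perp p) one (ea_perp_spec p)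
  rw [ea_seq_one, hxp, ea_zero_oplus] at hsum
  have hx : SEA.seq x (perp p) = x := Option.some.inj hsum
  have hle := ea_seq_le_left (perp p) x
  rwa [← hcp, hx] at hle

theorem ea_seq_perp_self {p : E} (hp : Sharp p) : SEA.seq p (perp p) = zero := by
  have h1 : le (SEA.seq p (perp p)) p := ea_seq_le_left p (perp p)
  have hcomm : SEA.seq p (perp p) = SEA.seq (perp p) p := SEA.comm_perp p p rfl
  have h2 : le (SEA.seq p (perp p)) (perp p) := by
    rw [hcomm]; exact ea_seq_le_left (perp p) p
  exact hp _ h1 h2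

theorem ea_seq_zero_of_le_perp {p x : E} (hp : Sharp p) (h : le x (perp p)) :
    SEA.seq p x = zero := by
  have h2 := ea_seq_mono p h
  rw [ea_seq_perp_self hp] at h2
  exact ea_le_zero h2

theorem ea_osum_seq (p : E) {l : List E} {s : E} (h : osum l = some s) :
    osum (l.map (SEA.seq p)) = some (SEA.seq p s) := by
  induction l generalizing s with
  | nil =>
    have hs : (zero : E) = s := Option.some.inj h
    subst hs
    show some (zero : E) = some (SEA.seq p zero)
    rw [ea_seq_zero]
  | cons a t ih =>
    obtain ⟨s', ht, ha⟩ := ea_osum_cons h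
    show osum (SEA.seq p a :: t.map (SEA.seq p)) = some (SEA.seq p s)
    rw [osum, ih ht]
    show oplus (SEA.seq p a) (SEA.seq p s') = some (SEA.seq p s)
    exact SEA.seq_oplus p a s' s ha

end SeqAux

section ConvexAux

variable [ConvexEA E]

theorem ea_smul_zero (x : E) : ConvexEA.smul (0 : ℝ) x = zero := by
  have h := ConvexEA.smul_add_coeff 0 0 x le_rfl le_rfl (by norm_num)
  norm_num at h
  exact ea_cancel h (ea_oplus_zero (ConvexEA.smul (0 : ℝ) x))

theorem ea_smul_le_self {t : ℝ} (h0 : 0 ≤ t) (h1 : t ≤ 1) (x : E) :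
    le (ConvexEA.smul t x) x := by
  have h := ConvexEA.smul_add_coeff t (1 - t) x h0 (by linarith) (by linarith)
  rw [show t + (1 - t) = 1 by ring, ConvexEA.one_smul] at h
  exact ⟨_, h⟩

theorem ea_smul_mono {t : ℝ} (h0 : 0 ≤ t) (h1 : t ≤ 1) {x y : E} (h : le x y) :
    le (ConvexEA.smul t x) (ConvexEA.smul t y) := by
  obtain ⟨c, hc⟩ := h
  exact ⟨ConvexEA.smul t c, ConvexEA.smul_oplus t x c y h0 h1 hc⟩

theorem ea_half_half (x : E) :
    oplus (ConvexEA.smul (2⁻¹ : ℝ) x) (ConvexEA.smul (2⁻¹ : ℝ) x) = some x := by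
  have h := ConvexEA.smul_add_coeff 2⁻¹ 2⁻¹ x (by norm_num) (by norm_num) (by norm_num)
  rwa [show (2⁻¹ + 2⁻¹ : ℝ) = 1 by norm_num, ConvexEA.one_smul] at h

theorem ea_le_of_half_le {x y : E}
    (h : le (ConvexEA.smul (2⁻¹ : ℝ) x) (ConvexEA.smul (2⁻¹ : ℝ) y)) : le x y := by
  obtain ⟨c, hc⟩ := h
  obtain ⟨u, hu1, hu2⟩ := oplus_assoc hc (ea_half_half y)
  obtain ⟨cc, hcc, h3⟩ := ea_rot hc hu1
  obtain ⟨s2, hs2, h4⟩ := ea_rot h3 hu2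
  obtain ⟨s3, hs3, h5⟩ := ea_rot hs2 h4
  have hx : s3 = x := (Option.some.inj ((ea_half_half x).symm.trans hs3)).symm
  rw [hx] at h5
  exact ⟨cc, by rw [oplus_comm]; exact h5⟩

theorem ea_seq_smul_zero [SEA E] {a q : E} {t : ℝ} (h0 : 0 < t) (h1 : t ≤ 1)
    (h : SEA.seq a (ConvexEA.smul t q) = zero) : SEA.seq a q = zero := by
  obtain ⟨n, hn⟩ := exists_nat_one_div_lt h0
  set c : ℝ := 1 / ((n : ℝ) + 1) with hcdef
  have hc0 : 0 < c := by positivity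
  have hct : c ≤ t := le_of_lt hn
  have hle : le (ConvexEA.smul c q) (ConvexEA.smul t q) := by
    have h2 := ConvexEA.smul_add_coeff c (t - c) q (le_of_lt hc0) (by linarith) (by linarith)
    rw [show c + (t - c) = t by ring] at h2
    exact ⟨_, h2⟩
  have hzero : SEA.seq a (ConvexEA.smul c q) = zero := by
    have h2 := ea_seq_mono a hle
    rw [h] at h2
    exact ea_le_zero h2
  have hnc : ((n : ℝ) + 1) * c = 1 := by
    rw [hcdef]; field_simp
  have key : ∀ k : ℕ, (k : ℝ) ≤ (n : ℝ) + 1 →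
      SEA.seq a (ConvexEA.smul ((k : ℝ) * c) q) = zero := by
    intro k
    induction k with
    | zero =>
      intro _
      rw [show ((0 : ℕ) : ℝ) * c = 0 by push_cast; ring, ea_smul_zero, ea_seq_zero]
    | succ k ih =>
      intro hk
      have hk1 : ((k : ℝ) + 1) ≤ (n : ℝ) + 1 := by push_cast at hk ⊢; linarith
      have hkc : (k : ℝ) * c + c ≤ 1 := by
        have := mul_le_mul_of_nonneg_right hk1 (le_of_lt hc0)
        rw [hnc] at this
        linarith [this]
      have hsum := ConvexEA.smul_add_coeff ((k : ℝ) * c) c q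
        (by positivity) (le_of_lt hc0) hkc
      rw [show (k : ℝ) * c + c = ((k + 1 : ℕ) : ℝ) * c by push_cast; ring] at hsum
      have h3 := SEA.seq_oplus a _ _ _ hsum
      rw [ih (by push_cast at hk ⊢; linarith), hzero, ea_zero_oplus] at h3
      exact (Option.some.inj h3).symm
  have hfin := key (n + 1) (by push_cast; linarith)
  rw [show ((n + 1 : ℕ) : ℝ) * c = 1 by push_cast; linarith [hnc], ConvexEA.one_smul] at hfin
  exact hfin

end ConvexAux

end Stmt6Aux

open EffectAlgebra in
/-- if `a°` exists and `b` is the norm limit of a sequence of elements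
`b_n ≤ b` of the form `⊕_i λ_{n,i} p_{n,i}` with `λ_{n,i} ∈ [0,1]` and `p_{n,i}` sharp,
then `a ∘ b = 0 ↔ a° ∘ b = 0`. -/
theorem stmt6 {E : Type u} [EffectAlgebra E] [SEA E] [ConvexEA E]
    (harch : StronglyArchimedean E) (a p b : E) (hcov : sIsProjCover a p)
    (f : ℕ → E) (hfb : ∀ n, le (f n) b) (hlim : NormLimit f b)
    (hsimple : ∀ n, ∃ l : List (ℝ × E),
      (∀ x ∈ l, x.1 ∈ Set.Icc (0 : ℝ) 1 ∧ Sharp x.2) ∧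
      osum (l.map fun x => ConvexEA.smul x.1 x.2) = some (f n)) :
    SEA.seq a b = zero ↔ SEA.seq p b = zero := by
  obtain ⟨hps, hcovq⟩ := hcov
  constructor
  · intro hab
    have hfP : ∀ n, le (f n) (perp p) := by
      intro n
      obtain ⟨l, hl, hsum⟩ := hsimple n
      have hpf : SEA.seq p (f n) = zero := by
        have h1 := ea_osum_seq p hsum
        have h2 : osum ((l.map fun x => ConvexEA.smul x.1 x.2).map (SEA.seq p))
            = some zero := by
          apply ea_osum_all_zero
          intro y hy
          obtain ⟨z, hz, rfl⟩ := List.mem_map.mp hy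
          obtain ⟨x, hx, rfl⟩ := List.mem_map.mp hz
          obtain ⟨hxI, hxs⟩ := hl x hx
          obtain ⟨hx0, hx1⟩ := hxI
          by_cases h0 : x.1 = 0
          · rw [h0, ea_smul_zero, ea_seq_zero]
          · have hx0' : 0 < x.1 := lt_of_le_of_ne hx0 (Ne.symm h0)
            have h3 : le (ConvexEA.smul x.1 x.2) (f n) := ea_osum_le hsum _ hz
            have h5 : SEA.seq a (ConvexEA.smul x.1 x.2) = zero := by
              have h4 := ea_seq_mono a (ea_le_trans h3 (hfb n))
              rw [hab] at h4
              exact ea_le_zero h4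
            have h6 : SEA.seq a x.2 = zero := ea_seq_smul_zero hx0' hx1 h5
            have h7 : SEA.seq x.2 a = zero := SEA.seq_zero_symm a x.2 h6
            have h8 : le a (perp x.2) := ea_le_perp_of_seq_zero h7
            have h9 : le p (perp x.2) := (hcovq (perp x.2) (ea_sharp_perp hxs)).mp h8
            have h10 : le x.2 (perp p) := by
              have h11 := ea_perp_le_perp h9
              rwa [ea_perp_perp] at h11
            have h11 : SEA.seq p x.2 = zero := ea_seq_zero_of_le_perp hps h10
            have h12 := ea_seq_mono p (ea_smul_le_self hx0 hx1 x.2)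
            rw [h11] at h12
            exact ea_le_zero h12
        exact Option.some.inj (h1.symm.trans h2)
      exact ea_le_perp_of_seq_zero hpf
    have hbP : le b (perp p) := by
      apply ea_le_of_half_le
      refine harch _ _ (ConvexEA.smul (2⁻¹ : ℝ) one) (fun n => ?_)
      set ε : ℝ := 1 / ((n : ℝ) + 1) with hεdef
      have hε0 : 0 < ε := by positivity
      have hε1 : ε ≤ 1 := by
        rw [hεdef, div_le_one (by positivity)]
        linarith [Nat.cast_nonneg (α := ℝ) n]
      obtain ⟨N, hN⟩ := hlim ε hε0
      obtain ⟨_, d0, hd0, hbd0⟩ := hN N le_rfl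
      rw [min_eq_left hε1] at hd0
      have hhalfP : le (ConvexEA.smul (2⁻¹ : ℝ) (perp p)) (ConvexEA.smul (2⁻¹ : ℝ) one) :=
        ea_smul_mono (by norm_num) (by norm_num) (ea_le_one (perp p))
      have hhalfε : le (ConvexEA.smul (min ε 1 / 2) (one : E)) (ConvexEA.smul (2⁻¹ : ℝ) one) := by
        rw [min_eq_left hε1]
        have h2 := ConvexEA.smul_add_coeff (ε / 2) (2⁻¹ - ε / 2) (one : E)
          (by positivity) (by linarith) (by linarith)
        rw [show ε / 2 + (2⁻¹ - ε / 2) = 2⁻¹ by ring] at h2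
        exact ⟨_, h2⟩
      obtain ⟨t1, ht1, _⟩ := ea_oplus_le_left' hhalfP (ea_half_half (one : E))
      rw [min_eq_left hε1] at hhalfε
      obtain ⟨d, hd, _⟩ := ea_oplus_le_right hhalfε ht1
      refine ⟨d, ?_, ?_⟩
      · rw [ConvexEA.smul_smul 2⁻¹ (1 / ((n : ℝ) + 1)) (one : E) (by norm_num) (by norm_num)
          (le_of_lt hε0) hε1]
        rw [show (2⁻¹ * (1 / ((n : ℝ) + 1))) = ε / 2 by rw [hεdef]; ring]
        exact hd
      · have hfN : le (ConvexEA.smul (2⁻¹ : ℝ) (f N)) (ConvexEA.smul (2⁻¹ : ℝ) (perp p)) :=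
          ea_smul_mono (by norm_num) (by norm_num) (hfP N)
        exact ea_le_trans hbd0 (ea_oplus_le_left hfN hd0 hd)
    exact ea_seq_zero_of_le_perp hps hbP
  · intro hpb
    have h1 : SEA.seq b p = zero := SEA.seq_zero_symm p b hpb
    have hap : le a p := (hcovq p hps).mpr (ea_le_refl p)
    have h2 : le (SEA.seq b a) zero := by
      have h3 := ea_seq_mono b hap
      rwa [h1] at h3
    exact SEA.seq_zero_symm b a (ea_le_zero h2)
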